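/- Let r₁, r₂ ≥ 1 and let m_{1,2} ≤ ⋯ ≤ m_{r₂,2} and m_{1,1} ≤ ⋯ ≤ m_{r₁,1} ≤ −1 be integers with m_{r₂,2} ≥ r₁. Then the element x_{α₂}(m_{1,2})⋯x_{α₂}(m_{r₂,2})·x_{α₁}(m_{1,1})⋯x_{α₁}(m_{r₁,1}) of U(n̄) is a ℂ-linear combination of elements x_{α₂}(m'_{1,2})⋯x_{α₂}(m'_{r₂,2})·x_{α₁}(m'_{1,1})⋯x_{α₁}(m'_{r₁,1}) with m'_{1,2} ≤ ⋯ ≤ m'_{r₂,2} ≤ r₁ − 1, m'_{1,1} ≤ ⋯ ≤ m'_{r₁,1} ≤ −2 and with the same total index sum, plus an element of the left ideal U(n̄)n̄⁺, plus an element of the left ideal U(n̄)·x_{α₁}(−1) (the left ideal generated by x_{α₁}(−1)). -/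

import Mathlib

open scoped TensorProduct

noncomputable section

/-- 3×3 complex matrices 𝔤𝔩(3,ℂ), with the commutator Lie bracket. -/
abbrev Mat3 : Type := Matrix (Fin 3) (Fin 3) ℂ

attribute [instance] LieRing.ofAssociativeRing

lemma upperTri_mul {a b : Mat3} (ha : ∀ i j : Fin 3, j ≤ i → a i j = 0)
    (hb : ∀ i j : Fin 3, j ≤ i → b i j = 0) :
    ∀ i j : Fin 3, j ≤ i → (a * b) i j = 0 := by
  intro i j hij
  rw [Matrix.mul_apply]
  refine Finset.sum_eq_zero fun k _ => ?_
  by_cases hk : k ≤ i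
  · rw [ha i k hk, zero_mul]
  · rw [hb k j (hij.trans (not_le.mp hk).le), mul_zero]

/-- The Lie algebra 𝔫 of strictly upper triangular 3×3 complex matrices. -/
def strictUpper : LieSubalgebra ℂ Mat3 where
  carrier := {M : Mat3 | ∀ i j : Fin 3, j ≤ i → M i j = 0}
  add_mem' := fun {a b} ha hb i j hij => by
    simp only [Matrix.add_apply, ha i j hij, hb i j hij, add_zero]
  zero_mem' := fun i j _ => rfl
  smul_mem' := fun c a ha i j hij => by
    simp only [Matrix.smul_apply, ha i j hij, smul_zero]
  lie_mem' := fun {a b} ha hb i j hij => by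
    rw [Ring.lie_def, Matrix.sub_apply, upperTri_mul ha hb i j hij,
      upperTri_mul hb ha i j hij, sub_zero]

/-- x_{α₁} = E₁₂ ∈ 𝔫. -/
def xa1 : strictUpper :=
  ⟨Matrix.single 0 1 1, by
    intro i j hij
    fin_cases i <;> fin_cases j <;> simp_all [Matrix.single, Matrix.of_apply]⟩

/-- x_{α₂} = E₂₃ ∈ 𝔫. -/
def xa2 : strictUpper :=
  ⟨Matrix.single 1 2 1, by
    intro i j hij
    fin_cases i <;> fin_cases j <;> simp_all [Matrix.single, Matrix.of_apply]⟩

/-- x_{α₁+α₂} = E₁₃ ∈ 𝔫. -/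
def xa12 : strictUpper :=
  ⟨Matrix.single 0 2 1, by
    intro i j hij
    fin_cases i <;> fin_cases j <;> simp_all [Matrix.single, Matrix.of_apply]⟩

/-- The loop algebra n̄ = ℂ[t,t⁻¹] ⊗_ℂ 𝔫, with bracket
`[tᵐ ⊗ x, tⁿ ⊗ y] = t^{m+n} ⊗ [x,y]`. -/
abbrev loopN : Type := LaurentPolynomial ℂ ⊗[ℂ] strictUpper

/-- n̄ is a Lie algebra over ℂ (by restriction of scalars from ℂ[t,t⁻¹]). -/
instance : LieAlgebra ℂ loopN where
  lie_smul c x y := by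
    rw [← algebraMap_smul (LaurentPolynomial ℂ) c y,
      ← algebraMap_smul (LaurentPolynomial ℂ) c ⁅x, y⁆]
    exact lie_smul ((algebraMap ℂ (LaurentPolynomial ℂ)) c) x y

/-- The universal enveloping algebra U(n̄) over ℂ. -/
abbrev Uenv : Type := UniversalEnvelopingAlgebra ℂ loopN

/-- x(m) = tᵐ ⊗ x, viewed as an element of U(n̄). -/
def XX (x : strictUpper) (m : ℤ) : Uenv :=
  UniversalEnvelopingAlgebra.ι ℂ (LaurentPolynomial.T m ⊗ₜ[ℂ] x)

/-- The ordered monomial x(m₁)⋯x(m_r) ∈ U(n̄) attached to a single root vector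
`a` and a sequence of integers `m`. -/
def monom {r : ℕ} (a : strictUpper) (m : Fin r → ℤ) : Uenv :=
  (List.ofFn fun i => XX a (m i)).prod

/-- The left ideal U(n̄)n̄⁺ of U(n̄), generated by the x(m) with x ∈ 𝔫, m ≥ 0. -/
def UNplus : Ideal Uenv :=
  Ideal.span {u : Uenv | ∃ (x : strictUpper) (m : ℤ), 0 ≤ m ∧ u = XX x m}

/-- The truncated relation R^{[j]}_{t;m} = Σ_{m₁,m₂ ≤ m, m₁+m₂=t} x_{α_j}(m₁)x_{α_j}(m₂)
(here `a` stands for the root vector x_{α_j}). -/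
def Rtrunc (a : strictUpper) (t m : ℤ) : Uenv :=
  ∑ k ∈ Finset.Icc (t - m) m, XX a k * XX a (t - k)

/-- The two-sided ideal 𝒥 of U(n̄) generated by all R^{[j]}_{t;m}, j ∈ {1,2}. -/
def Jideal : TwoSidedIdeal Uenv :=
  TwoSidedIdeal.span {u : Uenv | ∃ t m : ℤ, u = Rtrunc xa1 t m ∨ u = Rtrunc xa2 t m}

/-- The difference two condition on a sequence m₁, …, m_r. -/
def diffTwo {r : ℕ} (m : Fin r → ℤ) : Prop :=
  ∀ i j : Fin r, (i : ℕ) + 1 = (j : ℕ) → m i + 2 ≤ m j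

-- ===== Part A: basic bracket/commutation lemmas =====

lemma XX_mul (x y : strictUpper) (m n : ℤ) :
    XX x m * XX y n = XX y n * XX x m + XX ⁅x, y⁆ (m + n) := by
  have h := (UniversalEnvelopingAlgebra.ι ℂ (L := loopN)).map_lie
    (LaurentPolynomial.T m ⊗ₜ[ℂ] x) (LaurentPolynomial.T n ⊗ₜ[ℂ] y)
  rw [LieAlgebra.ExtendScalars.bracket_tmul, Ring.lie_def] at h
  have h2 : XX ⁅x,y⁆ (m+n) = XX x m * XX y n - XX y n * XX x m := by
    unfold XX
    rw [LaurentPolynomial.T_add]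
    exact h
  rw [h2]; abel

lemma XX_zero (m : ℤ) : XX (0 : strictUpper) m = 0 := by
  unfold XX
  rw [TensorProduct.tmul_zero]
  exact (UniversalEnvelopingAlgebra.ι ℂ (L := loopN)).toLinearMap.map_zero

lemma XX_neg (x : strictUpper) (m : ℤ) : XX (-x) m = - XX x m := by
  unfold XX
  rw [TensorProduct.tmul_neg]
  exact (UniversalEnvelopingAlgebra.ι ℂ (L := loopN)).toLinearMap.map_neg _

lemma lie_xa1_xa2 : ⁅xa1, xa2⁆ = xa12 := by
  apply Subtype.ext
  have h1 : (⁅xa1, xa2⁆ : strictUpper).1 = xa1.1 * xa2.1 - xa2.1 * xa1.1 := rfl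
  rw [h1]
  simp only [xa1, xa2, xa12]
  ext i j
  fin_cases i <;> fin_cases j <;>
    simp [Matrix.mul_apply, Matrix.single, Fin.sum_univ_three]

lemma lie_xa1_xa12 : ⁅xa1, xa12⁆ = 0 := by
  apply Subtype.ext
  have h1 : (⁅xa1, xa12⁆ : strictUpper).1 = xa1.1 * xa12.1 - xa12.1 * xa1.1 := rfl
  rw [h1]
  simp only [xa1, xa12]
  ext i j
  fin_cases i <;> fin_cases j <;>
    simp [Matrix.mul_apply, Matrix.single, Fin.sum_univ_three]

lemma lie_xa2_xa12 : ⁅xa2, xa12⁆ = 0 := by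
  apply Subtype.ext
  have h1 : (⁅xa2, xa12⁆ : strictUpper).1 = xa2.1 * xa12.1 - xa12.1 * xa2.1 := rfl
  rw [h1]
  simp only [xa2, xa12]
  ext i j
  fin_cases i <;> fin_cases j <;>
    simp [Matrix.mul_apply, Matrix.single, Fin.sum_univ_three]

/-- abbreviations -/
noncomputable def aa (n : ℤ) : Uenv := XX xa1 n
noncomputable def bb (n : ℤ) : Uenv := XX xa2 n
noncomputable def cc (n : ℤ) : Uenv := XX xa12 n

lemma aa_comm (m n : ℤ) : aa m * aa n = aa n * aa m := by
  unfold aa; rw [XX_mul, lie_self, XX_zero, add_zero]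

lemma bb_comm (m n : ℤ) : bb m * bb n = bb n * bb m := by
  unfold bb; rw [XX_mul, lie_self, XX_zero, add_zero]

lemma ca_comm (k n : ℤ) : cc k * aa n = aa n * cc k := by
  unfold aa cc
  have := XX_mul xa1 xa12 n k
  rw [lie_xa1_xa12, XX_zero, add_zero] at this
  exact this.symm

lemma cb_comm (k n : ℤ) : cc k * bb n = bb n * cc k := by
  unfold bb cc
  have := XX_mul xa2 xa12 n k
  rw [lie_xa2_xa12, XX_zero, add_zero] at this
  exact this.symm

lemma ab_comm (n m : ℤ) : aa n * bb m = bb m * aa n + cc (n + m) := by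
  unfold aa bb cc
  rw [XX_mul, lie_xa1_xa2]

lemma ba_comm (m n : ℤ) : bb m * aa n = aa n * bb m - cc (m + n) := by
  unfold aa bb cc
  rw [XX_mul xa2 xa1 m n]
  have : ⁅xa2, xa1⁆ = -xa12 := by rw [← lie_xa1_xa2, ← lie_skew]
  rw [this, XX_neg]
  have : n + m = m + n := by omega
  abel
-- ===== Part B: list products and expansion =====

noncomputable def aprod (l : List ℤ) : Uenv := (l.map aa).prod
noncomputable def bprod (l : List ℤ) : Uenv := (l.map bb).prod

lemma aprod_nil : aprod [] = 1 := rfl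
lemma bprod_nil : bprod [] = 1 := rfl
lemma aprod_cons (n : ℤ) (l : List ℤ) : aprod (n :: l) = aa n * aprod l := by
  unfold aprod; rw [List.map_cons, List.prod_cons]
lemma bprod_cons (n : ℤ) (l : List ℤ) : bprod (n :: l) = bb n * bprod l := by
  unfold bprod; rw [List.map_cons, List.prod_cons]
lemma aprod_append (l₁ l₂ : List ℤ) : aprod (l₁ ++ l₂) = aprod l₁ * aprod l₂ := by
  unfold aprod; rw [List.map_append, List.prod_append]
lemma bprod_append (l₁ l₂ : List ℤ) : bprod (l₁ ++ l₂) = bprod l₁ * bprod l₂ := by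
  unfold bprod; rw [List.map_append, List.prod_append]

lemma cc_aprod (k : ℤ) (l : List ℤ) : aprod l * cc k = cc k * aprod l := by
  induction l with
  | nil => rw [aprod_nil, one_mul, mul_one]
  | cons n t ih =>
    rw [aprod_cons, mul_assoc, ih, ← mul_assoc, ← ca_comm, mul_assoc]

lemma aa_aprod (n : ℤ) (l : List ℤ) : aprod l * aa n = aa n * aprod l := by
  induction l with
  | nil => rw [aprod_nil, one_mul, mul_one]
  | cons x t ih =>
    rw [aprod_cons, mul_assoc, ih, ← mul_assoc, aa_comm, mul_assoc]

lemma bb_bprod (n : ℤ) (l : List ℤ) : bprod l * bb n = bb n * bprod l := by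
  induction l with
  | nil => rw [bprod_nil, one_mul, mul_one]
  | cons x t ih =>
    rw [bprod_cons, mul_assoc, ih, ← mul_assoc, bb_comm, mul_assoc]

lemma aprod_perm {l l' : List ℤ} (h : l.Perm l') : aprod l = aprod l' := by
  apply List.Perm.prod_eq' (h.map aa)
  have : ∀ (l : List ℤ), List.Pairwise Commute (l.map aa) := by
    intro l
    induction l with
    | nil => simp
    | cons x t ih =>
      rw [List.map_cons, List.pairwise_cons]
      refine ⟨?_, ih⟩
      intro b hb
      rcases List.mem_map.mp hb with ⟨y, _, rfl⟩
      exact aa_comm x y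
  exact this l

lemma bprod_perm {l l' : List ℤ} (h : l.Perm l') : bprod l = bprod l' := by
  apply List.Perm.prod_eq' (h.map bb)
  have : ∀ (l : List ℤ), List.Pairwise Commute (l.map bb) := by
    intro l
    induction l with
    | nil => simp
    | cons x t ih =>
      rw [List.map_cons, List.pairwise_cons]
      refine ⟨?_, ih⟩
      intro b hb
      rcases List.mem_map.mp hb with ⟨y, _, rfl⟩
      exact bb_comm x y
  exact this l

/-- the commutator sum appearing when moving `bb m` across `aprod l` -/
noncomputable def Cs (m : ℤ) : List ℤ → Uenv
  | [] => 0
  | n :: t => cc (m + n) * aprod t + aa n * Cs m t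

lemma bb_aprod (m : ℤ) (l : List ℤ) :
    bb m * aprod l = aprod l * bb m - Cs m l := by
  induction l with
  | nil => rw [aprod_nil, Cs, one_mul, mul_one, sub_zero]
  | cons n t ih =>
    rw [aprod_cons, ← mul_assoc, ba_comm, sub_mul, mul_assoc, ih, Cs]
    rw [mul_sub, ← mul_assoc]
    abel

lemma Cs_expand (m : ℤ) (l : List ℤ) :
    Cs m l = ∑ i ∈ Finset.range l.length, cc (m + l.getD i 0) * aprod (l.eraseIdx i) := by
  induction l with
  | nil => simp [Cs]
  | cons n t ih =>
    rw [Cs, ih, Finset.mul_sum, List.length_cons, Finset.sum_range_succ', add_comm]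
    congr 1
    apply Finset.sum_congr rfl
    intro i _
    have h1 : (n :: t).getD (i+1) 0 = t.getD i 0 := rfl
    have h2 : (n :: t).eraseIdx (i+1) = n :: t.eraseIdx i := rfl
    rw [h1, h2, aprod_cons, ← mul_assoc, ← ca_comm, mul_assoc]

-- ===== ideal lemmas =====

lemma mem_UNplus_mul (u : Uenv) (x : strictUpper) (m : ℤ) (hm : 0 ≤ m) :
    u * XX x m ∈ UNplus := by
  exact Ideal.mul_mem_left _ u (Ideal.subset_span ⟨x, m, hm, rfl⟩)

lemma mem_Ia_mul (u : Uenv) : u * aa (-1) ∈ Ideal.span {XX xa1 (-1)} := by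
  exact Ideal.mul_mem_left _ u (Ideal.subset_span rfl)

lemma cc_die (u : Uenv) (k : ℤ) (hk : -1 ≤ k) :
    ∃ y ∈ UNplus, ∃ z ∈ Ideal.span {XX xa1 (-1)}, u * cc k = y + z := by
  have h := ab_comm (-1) (k+1)
  have hck : (-1) + (k+1) = k := by omega
  rw [hck] at h
  refine ⟨u * aa (-1) * bb (k+1), ?_, -(u * bb (k+1) * aa (-1)), ?_, ?_⟩
  · exact mem_UNplus_mul _ xa2 _ (by omega)
  · exact neg_mem (mem_Ia_mul _)
  · have : u * cc k = u * (aa (-1) * bb (k+1)) - u * (bb (k+1) * aa (-1)) := by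
      rw [← mul_sub]
      congr 1
      rw [h]; abel
    rw [this, ← mul_assoc, ← mul_assoc]
    abel

lemma Cs_mem (G : Submodule ℂ Uenv) (u : Uenv) (m : ℤ) :
    ∀ (l pre : List ℤ),
      (∀ l₁ x l₂, l = l₁ ++ x :: l₂ → u * cc (m + x) * aprod (pre ++ (l₁ ++ l₂)) ∈ G) →
      u * (aprod pre * Cs m l) ∈ G := by
  intro l
  induction l with
  | nil => intro pre _; rw [Cs, mul_zero, mul_zero]; exact zero_mem G
  | cons n t ih =>
    intro pre H
    rw [Cs, mul_add, mul_add]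
    apply add_mem
    · have : aprod pre * (cc (m + n) * aprod t) = cc (m+n) * aprod (pre ++ t) := by
        rw [← mul_assoc, cc_aprod, mul_assoc, ← aprod_append]
      rw [this, ← mul_assoc]
      have := H [] n t rfl
      simpa using this
    · have : aprod pre * (aa n * Cs m t) = aprod (pre ++ [n]) * Cs m t := by
        rw [aprod_append, ← mul_assoc]
        congr 1
        have : aprod [n] = aa n := by rw [show [n] = n :: [] from rfl, aprod_cons, aprod_nil, mul_one]
        rw [this, aa_aprod]
      rw [this]
      apply ih (pre ++ [n])
      intro l₁ x l₂ hsplit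
      have h2 := H (n :: l₁) x l₂ (by rw [hsplit]; rfl)
      have : pre ++ [n] ++ (l₁ ++ l₂) = pre ++ (n :: l₁ ++ l₂) := by simp
      rw [this]
      exact h2
-- ===== Part C: the key lemma =====

lemma Cs_eq (m : ℤ) (l : List ℤ) : Cs m l = aprod l * bb m - bb m * aprod l := by
  rw [bb_aprod]; abel

def Fshift {s : ℕ} (F : Fin s → ℤ) (ε : Finset (Fin s)) : Fin s → ℤ :=
  fun i => F i - if i ∈ ε then 1 else 0

lemma Fshift_empty {s : ℕ} (F : Fin s → ℤ) : Fshift F ∅ = F := by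
  funext i; simp [Fshift]

lemma Fshift_le {s : ℕ} (F : Fin s → ℤ) (ε : Finset (Fin s)) (i : Fin s) :
    Fshift F ε i ≤ F i := by
  unfold Fshift; split <;> omega

lemma sum_ofFn_Fshift {s : ℕ} (F : Fin s → ℤ) (ε : Finset (Fin s)) :
    (List.ofFn (Fshift F ε)).sum = (List.ofFn F).sum - ε.card := by
  rw [List.sum_ofFn, List.sum_ofFn]
  unfold Fshift
  rw [Finset.sum_sub_distrib]
  congr 1
  rw [Finset.sum_ite_mem]
  simp

lemma eraseIdx_ofFn_congr {s : ℕ} (f g : Fin s → ℤ) (i : ℕ)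
    (h : ∀ (j : ℕ) (hj : j < s), j ≠ i → f ⟨j, hj⟩ = g ⟨j, hj⟩) :
    (List.ofFn f).eraseIdx i = (List.ofFn g).eraseIdx i := by
  apply List.ext_getElem
  · simp [List.length_eraseIdx]
  · intro j h1 h2
    rw [List.getElem_eraseIdx, List.getElem_eraseIdx]
    split
    · next hj =>
        rw [List.getElem_ofFn, List.getElem_ofFn]
        exact h _ _ (by omega)
    · next hj =>
        rw [List.getElem_ofFn, List.getElem_ofFn]
        exact h _ _ (by omega)

lemma getD_ofFn {s : ℕ} (f : Fin s → ℤ) (i : ℕ) (hi : i < s) :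
    (List.ofFn f).getD i 0 = f ⟨i, hi⟩ := by
  have hl : i < (List.ofFn f).length := by simp [hi]
  rw [List.getD_eq_getElem _ _ hl, List.getElem_ofFn]

set_option maxHeartbeats 2000000 in
lemma keyC (s : ℕ) (u : Uenv) (σ : ℤ) (G : Submodule ℂ Uenv)
    (hUN : ∀ y ∈ UNplus, y ∈ G)
    (hIa : ∀ y ∈ Ideal.span {XX xa1 (-1)}, y ∈ G)
    (hg : ∀ (j : ℕ), j ≤ s → ∀ S : List ℤ, S.length = s + 1 → (∀ x ∈ S, x ≤ -2) →
          (j : ℤ) + S.sum = σ → u * bb (j : ℤ) * aprod S ∈ G) :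
    ∀ (d : ℕ) (w : ℤ), w = -2 - (d : ℤ) →
      ∀ (F : Fin s → ℤ), (∀ i, F i ≤ -2) → w + (List.ofFn F).sum = σ →
      u * (cc w * aprod (List.ofFn F)) ∈ G := by
  intro d
  induction d using Nat.strong_induction_on with
  | _ d IH =>
  intro w hw F hF hsum
  -- Step 1: the signed sum of `u * Cs` over all ε is in G
  have hGsum : (∑ ε : Finset (Fin s),
      ((-1 : ℂ)) ^ ε.card • (u * Cs (ε.card : ℤ) (w :: List.ofFn (Fshift F ε)))) ∈ G := by
    have heq : ∀ ε : Finset (Fin s),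
        u * Cs (ε.card : ℤ) (w :: List.ofFn (Fshift F ε)) =
        (u * aprod (w :: List.ofFn (Fshift F ε))) * bb (ε.card : ℤ) -
        (u * bb (ε.card : ℤ)) * aprod (w :: List.ofFn (Fshift F ε)) := by
      intro ε
      rw [Cs_eq, mul_sub, ← mul_assoc, ← mul_assoc]
    have : ∀ ε : Finset (Fin s),
        ((-1 : ℂ)) ^ ε.card • (u * Cs (ε.card : ℤ) (w :: List.ofFn (Fshift F ε))) ∈ G := by
      intro ε
      rw [heq ε]
      apply Submodule.smul_mem
      apply sub_mem
      · apply hUN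
        exact mem_UNplus_mul _ xa2 _ (Int.natCast_nonneg _)
      · apply hg ε.card
        · have := Finset.card_le_univ ε
          simpa using this
        · simp
        · intro x hx
          rcases List.mem_cons.mp hx with h | h
          · omega
          · rcases (List.mem_ofFn).mp h with ⟨i, hi⟩
            rw [← hi]
            exact le_trans (Fshift_le F ε i) (hF i)
        · rw [List.sum_cons, sum_ofFn_Fshift]
          push_cast
          omega
    exact Submodule.sum_mem G (fun ε _ => this ε)
  -- Step 2: expand Cs and split off the i = 0 term
  have hexp : ∀ ε : Finset (Fin s),
      u * Cs (ε.card : ℤ) (w :: List.ofFn (Fshift F ε)) =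
      u * (cc ((ε.card : ℤ) + w) * aprod (List.ofFn (Fshift F ε))) +
      ∑ i ∈ Finset.range s,
        u * (cc ((ε.card : ℤ) + (List.ofFn (Fshift F ε)).getD i 0) *
          aprod (w :: (List.ofFn (Fshift F ε)).eraseIdx i)) := by
    intro ε
    rw [Cs_expand]
    have hlen : (w :: List.ofFn (Fshift F ε)).length = s + 1 := by simp
    rw [hlen, Finset.sum_range_succ', mul_add, Finset.mul_sum, add_comm]
    congr 1
  -- Step 3: the i-indexed terms cancel in the signed sum
  have hcancel : ∀ i ∈ Finset.range s,
      (∑ ε : Finset (Fin s), ((-1 : ℂ)) ^ ε.card •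
        (u * (cc ((ε.card : ℤ) + (List.ofFn (Fshift F ε)).getD i 0) *
          aprod (w :: (List.ofFn (Fshift F ε)).eraseIdx i)))) = 0 := by
    intro i hi
    have his : i < s := Finset.mem_range.mp hi
    set ι : Fin s := ⟨i, his⟩ with hι
    -- generic pair cancellation
    have key : ∀ ε : Finset (Fin s), ι ∉ ε →
        ((-1 : ℂ)) ^ ε.card • (u * (cc ((ε.card : ℤ) + (List.ofFn (Fshift F ε)).getD i 0) *
          aprod (w :: (List.ofFn (Fshift F ε)).eraseIdx i))) +
        ((-1 : ℂ)) ^ (insert ι ε).card • (u * (cc (((insert ι ε).card : ℤ) +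
          (List.ofFn (Fshift F (insert ι ε))).getD i 0) *
          aprod (w :: (List.ofFn (Fshift F (insert ι ε))).eraseIdx i))) = 0 := by
      intro ε hιε
      have hcard : (insert ι ε).card = ε.card + 1 := Finset.card_insert_of_notMem hιε
      have hval : ((insert ι ε).card : ℤ) + (List.ofFn (Fshift F (insert ι ε))).getD i 0 =
          (ε.card : ℤ) + (List.ofFn (Fshift F ε)).getD i 0 := by
        rw [getD_ofFn _ i his, getD_ofFn _ i his, hcard]
        unfold Fshift
        rw [if_pos (Finset.mem_insert_self ι ε), if_neg (by exact hιε)]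
        push_cast
        ring
      have hlist : (List.ofFn (Fshift F (insert ι ε))).eraseIdx i =
          (List.ofFn (Fshift F ε)).eraseIdx i := by
        apply eraseIdx_ofFn_congr
        intro j hjs hj
        unfold Fshift
        have : (⟨j, hjs⟩ : Fin s) ∈ insert ι ε ↔ (⟨j, hjs⟩ : Fin s) ∈ ε := by
          rw [Finset.mem_insert]
          constructor
          · rintro (h | h)
            · exact absurd (congrArg Fin.val h) hj
            · exact h
          · exact Or.inr
        rw [if_congr this rfl rfl]
      rw [hval, hlist, hcard, pow_succ, mul_smul, neg_one_smul, smul_neg]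
      exact add_neg_cancel _
    apply Finset.sum_involution
      (g := fun ε _ => if ι ∈ ε then ε.erase ι else insert ι ε)
    · intro ε _
      by_cases hmem : ι ∈ ε
      · simp only [if_pos hmem]
        have h' := key (ε.erase ι) (Finset.notMem_erase ι ε)
        rw [Finset.insert_erase hmem] at h'
        rw [add_comm]
        exact h'
      · simp only [if_neg hmem]
        exact key ε hmem
    · intro ε _ _
      by_cases hmem : ι ∈ ε
      · simp only [if_pos hmem]
        intro he
        exact (he ▸ Finset.notMem_erase ι ε) hmem
      · simp only [if_neg hmem]
        intro he
        exact hmem (he ▸ Finset.mem_insert_self ι ε)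
    · intro ε _
      by_cases hmem : ι ∈ ε
      · simp only [if_pos hmem, if_neg (Finset.notMem_erase ι ε)]
        exact Finset.insert_erase hmem
      · simp only [if_neg hmem, if_pos (Finset.mem_insert_self ι ε)]
        exact Finset.erase_insert hmem
    · intro ε _
      exact Finset.mem_univ _
  -- Step 4: assemble
  have hsum_eq : (∑ ε : Finset (Fin s),
      ((-1 : ℂ)) ^ ε.card • (u * Cs (ε.card : ℤ) (w :: List.ofFn (Fshift F ε)))) =
      ∑ ε : Finset (Fin s), ((-1 : ℂ)) ^ ε.card •
        (u * (cc ((ε.card : ℤ) + w) * aprod (List.ofFn (Fshift F ε)))) := by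
    calc (∑ ε : Finset (Fin s),
        ((-1 : ℂ)) ^ ε.card • (u * Cs (ε.card : ℤ) (w :: List.ofFn (Fshift F ε))))
        = ∑ ε : Finset (Fin s), (((-1 : ℂ)) ^ ε.card •
            (u * (cc ((ε.card : ℤ) + w) * aprod (List.ofFn (Fshift F ε)))) +
          ∑ i ∈ Finset.range s, ((-1 : ℂ)) ^ ε.card •
            (u * (cc ((ε.card : ℤ) + (List.ofFn (Fshift F ε)).getD i 0) *
              aprod (w :: (List.ofFn (Fshift F ε)).eraseIdx i)))) := by
          apply Finset.sum_congr rfl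
          intro ε _
          rw [hexp ε, smul_add, Finset.smul_sum]
      _ = (∑ ε : Finset (Fin s), ((-1 : ℂ)) ^ ε.card •
            (u * (cc ((ε.card : ℤ) + w) * aprod (List.ofFn (Fshift F ε))))) +
          ∑ ε : Finset (Fin s), ∑ i ∈ Finset.range s, ((-1 : ℂ)) ^ ε.card •
            (u * (cc ((ε.card : ℤ) + (List.ofFn (Fshift F ε)).getD i 0) *
              aprod (w :: (List.ofFn (Fshift F ε)).eraseIdx i))) := Finset.sum_add_distrib
      _ = (∑ ε : Finset (Fin s), ((-1 : ℂ)) ^ ε.card •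
            (u * (cc ((ε.card : ℤ) + w) * aprod (List.ofFn (Fshift F ε))))) + 0 := by
          congr 1
          rw [Finset.sum_comm]
          rw [Finset.sum_congr rfl hcancel]
          exact Finset.sum_const_zero
      _ = _ := add_zero _
  rw [hsum_eq] at hGsum
  -- membership of each nonempty-ε term
  have hterm : ∀ ε : Finset (Fin s), ε ≠ ∅ →
      ((-1 : ℂ)) ^ ε.card •
        (u * (cc ((ε.card : ℤ) + w) * aprod (List.ofFn (Fshift F ε)))) ∈ G := by
    intro ε hne
    apply Submodule.smul_mem
    by_cases hk : -1 ≤ (ε.card : ℤ) + w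
    · have : u * (cc ((ε.card : ℤ) + w) * aprod (List.ofFn (Fshift F ε))) =
          (u * aprod (List.ofFn (Fshift F ε))) * cc ((ε.card : ℤ) + w) := by
        rw [← cc_aprod, ← mul_assoc]
      rw [this]
      obtain ⟨y, hy, z, hz, hyz⟩ := cc_die (u * aprod (List.ofFn (Fshift F ε))) _ hk
      rw [hyz]
      exact add_mem (hUN y hy) (hIa z hz)
    · push_neg at hk
      have hc1 : 1 ≤ ε.card := Finset.card_pos.mpr (Finset.nonempty_iff_ne_empty.mpr hne)
      have hcd : ε.card ≤ d := by omega
      apply IH (d - ε.card) (by omega) ((ε.card : ℤ) + w) (by push_cast; omega)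
        (Fshift F ε)
      · intro i
        exact le_trans (Fshift_le F ε i) (hF i)
      · rw [sum_ofFn_Fshift]
        linarith [hsum]
  -- peel off the ε = ∅ term
  have hpeel := Finset.sum_erase_add Finset.univ
    (fun ε : Finset (Fin s) => ((-1 : ℂ)) ^ ε.card •
        (u * (cc ((ε.card : ℤ) + w) * aprod (List.ofFn (Fshift F ε)))))
    (Finset.mem_univ (∅ : Finset (Fin s)))
  have herase : (∑ ε ∈ Finset.univ.erase (∅ : Finset (Fin s)),
      ((-1 : ℂ)) ^ ε.card •
        (u * (cc ((ε.card : ℤ) + w) * aprod (List.ofFn (Fshift F ε))))) ∈ G :=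
    Submodule.sum_mem G (fun ε hε => hterm ε (Finset.ne_of_mem_erase hε))
  have hempty : ((-1 : ℂ)) ^ (∅ : Finset (Fin s)).card •
      (u * (cc (((∅ : Finset (Fin s)).card : ℤ) + w) * aprod (List.ofFn (Fshift F (∅ : Finset (Fin s)))))) =
      u * (cc w * aprod (List.ofFn F)) := by
    rw [Fshift_empty]
    simp
  have : u * (cc w * aprod (List.ofFn F)) =
      (∑ ε : Finset (Fin s), ((-1 : ℂ)) ^ ε.card •
        (u * (cc ((ε.card : ℤ) + w) * aprod (List.ofFn (Fshift F ε))))) -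
      ∑ ε ∈ Finset.univ.erase (∅ : Finset (Fin s)),
        ((-1 : ℂ)) ^ ε.card •
          (u * (cc ((ε.card : ℤ) + w) * aprod (List.ofFn (Fshift F ε)))) := by
    rw [← hpeel, ← hempty]
    abel
  rw [this]
  exact sub_mem hGsum herase
-- ===== Part D: sorting and the outer induction =====

lemma ofFn_getD_list (L : List ℤ) (n : ℕ) (h : L.length = n) :
    List.ofFn (fun i : Fin n => L.getD (i : ℕ) 0) = L := by
  subst h
  conv_rhs => rw [← List.ofFn_getElem (xs := L)]
  congr 1
  funext i
  rw [List.getD_eq_getElem _ _ i.isLt]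

lemma exists_monotone_perm (n : ℕ) (L : List ℤ) (hL : L.length = n) :
    ∃ m : Fin n → ℤ, Monotone m ∧ (List.ofFn m).Perm L := by
  classical
  set Ls := Multiset.sort (↑L : Multiset ℤ) (· ≤ ·) with hLs
  have hcoe : (↑Ls : Multiset ℤ) = ↑L := Multiset.sort_eq _ _
  have hperm : Ls.Perm L := Multiset.coe_eq_coe.mp hcoe
  have hlen : Ls.length = n := hperm.length_eq.trans hL
  have hsorted : Ls.Pairwise (· ≤ ·) := Multiset.pairwise_sort _ _
  refine ⟨fun i : Fin n => Ls.getD (i : ℕ) 0, ?_, ?_⟩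
  · intro i j hij
    rcases lt_or_eq_of_le hij with h | h
    · have hi : (i : ℕ) < Ls.length := by rw [hlen]; exact i.isLt
      have hj : (j : ℕ) < Ls.length := by rw [hlen]; exact j.isLt
      show Ls.getD (i : ℕ) 0 ≤ Ls.getD (j : ℕ) 0
      rw [List.getD_eq_getElem _ _ hi, List.getD_eq_getElem _ _ hj]
      exact hsorted.rel_get_of_lt (by simpa using h)
    · rw [h]
  · rw [ofFn_getD_list Ls n hlen]
    exact hperm

lemma monom_eq_bprod {r : ℕ} (m : Fin r → ℤ) : monom xa2 m = bprod (List.ofFn m) := by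
  unfold monom bprod bb
  rw [List.map_ofFn]
  rfl

lemma monom_eq_aprod {r : ℕ} (m : Fin r → ℤ) : monom xa1 m = aprod (List.ofFn m) := by
  unfold monom aprod aa
  rw [List.map_ofFn]
  rfl

lemma good_mem (r1 r2 : ℕ) (N : ℤ) (B A : List ℤ) (hB : B.length = r2) (hA : A.length = r1)
    (hBle : ∀ x ∈ B, x ≤ (r1 : ℤ) - 1) (hAle : ∀ x ∈ A, x ≤ -2) (hsum : B.sum + A.sum = N) :
    bprod B * aprod A ∈ {u : Uenv | ∃ (m2' : Fin r2 → ℤ) (m1' : Fin r1 → ℤ),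
      Monotone m2' ∧ Monotone m1' ∧ (∀ i, m2' i ≤ (r1 : ℤ) - 1) ∧ (∀ i, m1' i ≤ -2) ∧
      ((∑ i, m2' i) + ∑ i, m1' i = N) ∧ u = monom xa2 m2' * monom xa1 m1'} := by
  obtain ⟨m2', hm2mono, hm2perm⟩ := exists_monotone_perm r2 B hB
  obtain ⟨m1', hm1mono, hm1perm⟩ := exists_monotone_perm r1 A hA
  refine ⟨m2', m1', hm2mono, hm1mono, ?_, ?_, ?_, ?_⟩
  · intro i
    apply hBle
    apply hm2perm.mem_iff.mp
    exact (List.mem_ofFn).mpr ⟨i, rfl⟩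
  · intro i
    apply hAle
    apply hm1perm.mem_iff.mp
    exact (List.mem_ofFn).mpr ⟨i, rfl⟩
  · have h2 : (List.ofFn m2').sum = B.sum := hm2perm.sum_eq
    have h1 : (List.ofFn m1').sum = A.sum := hm1perm.sum_eq
    rw [List.sum_ofFn] at h2 h1
    rw [h2, h1]
    exact hsum
  · rw [monom_eq_bprod, monom_eq_aprod, bprod_perm hm2perm, aprod_perm hm1perm]

lemma reduceAll (s r2 : ℕ) (N : ℤ) (G : Submodule ℂ Uenv)
    (hUN : ∀ y ∈ UNplus, y ∈ G)
    (hIa : ∀ y ∈ Ideal.span {XX xa1 (-1)}, y ∈ G)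
    (hgood : ∀ B A : List ℤ, B.length = r2 → A.length = s + 1 →
      (∀ x ∈ B, x ≤ (s : ℤ)) → (∀ x ∈ A, x ≤ -2) → B.sum + A.sum = N →
      bprod B * aprod A ∈ G) :
    ∀ (nbad : ℕ) (B A : List ℤ), B.length = r2 → A.length = s + 1 →
      (∀ x ∈ A, x ≤ -2) → B.sum + A.sum = N →
      B.countP (fun x => decide ((s : ℤ) < x)) ≤ nbad →
      bprod B * aprod A ∈ G := by
  intro nbad
  induction nbad with
  | zero =>
    intro B A hB hA hAle hsum hcount
    apply hgood B A hB hA ?_ hAle hsum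
    intro x hx
    have h0 : B.countP (fun x => decide ((s : ℤ) < x)) = 0 := Nat.le_zero.mp hcount
    have := List.countP_eq_zero.mp h0 x hx
    simpa using this
  | succ n ih =>
    intro B A hB hA hAle hsum hcount
    by_cases hzero : B.countP (fun x => decide ((s : ℤ) < x)) = 0
    · apply hgood B A hB hA ?_ hAle hsum
      intro x hx
      have := List.countP_eq_zero.mp hzero x hx
      simpa using this
    · -- find a bad entry
      have hpos : 0 < B.countP (fun x => decide ((s : ℤ) < x)) := Nat.pos_of_ne_zero hzero
      obtain ⟨M, hMB, hMp⟩ := List.countP_pos_iff.mp hpos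
      have hM : (s : ℤ) < M := of_decide_eq_true hMp
      have hM0 : (0 : ℤ) ≤ M := le_trans (Int.natCast_nonneg s) (le_of_lt hM)
      set B' := B.erase M with hB'
      have hperm : B.Perm (M :: B') := List.perm_cons_erase hMB
      have hlenB' : B'.length + 1 = r2 := by
        have := hperm.length_eq
        simp only [List.length_cons] at this
        omega
      have hsumB : B.sum = M + B'.sum := by
        have := hperm.sum_eq
        simpa using this
      have hcountB' : B'.countP (fun x => decide ((s : ℤ) < x)) ≤ n := by
        have h1 := hperm.countP_eq (fun x => decide ((s : ℤ) < x))
        rw [List.countP_cons] at h1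
        rw [if_pos hMp] at h1
        omega
      -- rewrite the element
      have helt : bprod B * aprod A =
          (bprod B' * aprod A) * bb M - bprod B' * (aprod [] * Cs M A) := by
        rw [bprod_perm hperm, bprod_cons, ← bb_bprod, mul_assoc, bb_aprod, mul_sub,
          ← mul_assoc, aprod_nil, one_mul]
      rw [helt]
      apply sub_mem
      · exact hUN _ (mem_UNplus_mul _ xa2 M hM0)
      · apply Cs_mem G (bprod B') M A []
        intro l₁ x l₂ hsplit
        have hxA : x ∈ A := by rw [hsplit]; simp
        have hxle : x ≤ -2 := hAle x hxA
        have hlenL : (l₁ ++ l₂).length = s := by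
          have := hA
          rw [hsplit] at this
          simp at this ⊢
          omega
        have hsubL : ∀ y ∈ l₁ ++ l₂, y ≤ -2 := by
          intro y hy
          apply hAle
          rw [hsplit]
          rcases List.mem_append.mp hy with h | h
          · exact List.mem_append.mpr (Or.inl h)
          · exact List.mem_append.mpr (Or.inr (List.mem_cons_of_mem x h))
        have hsumL : (l₁ ++ l₂).sum = A.sum - x := by
          rw [hsplit]
          simp
          ring
        rw [List.nil_append]
        set k := M + x with hk
        by_cases hkge : -1 ≤ k
        · have hsh : bprod B' * cc k * aprod (l₁ ++ l₂) =
              (bprod B' * aprod (l₁ ++ l₂)) * cc k := by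
            rw [mul_assoc, ← cc_aprod, ← mul_assoc]
          rw [hsh]
          obtain ⟨y, hy, z, hz, hyz⟩ := cc_die _ k hkge
          rw [hyz]
          exact add_mem (hUN y hy) (hIa z hz)
        · push_neg at hkge
          have hkle : k ≤ -2 := by omega
          set L := l₁ ++ l₂ with hLdef
          set F : Fin s → ℤ := fun i => L.getD (i : ℕ) 0 with hFdef
          have hofFn : List.ofFn F = L := ofFn_getD_list L s hlenL
          have hFle : ∀ i, F i ≤ -2 := by
            intro i
            apply hsubL
            have hi : (i : ℕ) < L.length := by rw [hlenL]; exact i.isLt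
            rw [hFdef]
            simp only
            rw [List.getD_eq_getElem _ _ hi]
            exact List.getElem_mem hi
          have happ : bprod B' * cc k * aprod L = bprod B' * (cc k * aprod (List.ofFn F)) := by
            rw [hofFn, mul_assoc]
          rw [happ]
          apply keyC s (bprod B') (M + A.sum) G hUN hIa ?_ ((-k - 2).toNat) k (by omega) F hFle ?_
          · -- the `hg` hypothesis
            intro j hj S hSlen hSle hSsum
            have hjs : ((j : ℤ)) ≤ (s : ℤ) := by exact_mod_cast hj
            have : bprod B' * bb (j : ℤ) * aprod S = bprod (B' ++ [(j : ℤ)]) * aprod S := by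
              rw [bprod_append, bprod_cons, bprod_nil, mul_one]
            rw [this]
            apply ih (B' ++ [(j : ℤ)]) S ?_ hSlen hSle ?_ ?_
            · rw [List.length_append]
              simp only [List.length_singleton]
              omega
            · rw [List.sum_append]
              simp only [List.sum_cons, List.sum_nil]
              have : B'.sum + ((j : ℤ) + 0) + S.sum = B'.sum + ((j:ℤ) + S.sum) := by ring
              rw [this, hSsum]
              omega
            · rw [List.countP_append]
              have : ([( j : ℤ)].countP (fun x => decide ((s : ℤ) < x))) = 0 := by
                apply List.countP_eq_zero.mpr
                intro a ha
                simp at ha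
                subst ha
                simp
                omega
              rw [this]
              omega
          · rw [hofFn, hsumL]
            omega

/-- Lemma 3.5(1) of the paper: for `r₁, r₂ ≥ 1`, `m_{1,2} ≤ ⋯ ≤ m_{r₂,2}` with
`m_{r₂,2} ≥ r₁` and `m_{1,1} ≤ ⋯ ≤ m_{r₁,1} ≤ −1`, the monomial
`x_{α₂}(m_{1,2})⋯x_{α₂}(m_{r₂,2})x_{α₁}(m_{1,1})⋯x_{α₁}(m_{r₁,1})` is a ℂ-linear
combination of such monomials with `m'_{r₂,2} ≤ r₁ − 1`, `m'_{r₁,1} ≤ −2` and the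
same total index sum, plus an element of U(n̄)n̄⁺, plus an element of the left
ideal U(n̄)·x_{α₁}(−1). -/
theorem statement4 (r1 r2 : ℕ) (hr1 : 1 ≤ r1) (hr2 : 1 ≤ r2)
    (m2 : Fin r2 → ℤ) (m1 : Fin r1 → ℤ)
    (hm2 : Monotone m2) (hm1 : Monotone m1)
    (hm1neg : ∀ i, m1 i ≤ -1)
    (hm2big : (r1 : ℤ) ≤ m2 ⟨r2 - 1, by omega⟩) :
    ∃ v ∈ Submodule.span ℂ {u : Uenv |
        ∃ (m2' : Fin r2 → ℤ) (m1' : Fin r1 → ℤ),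
          Monotone m2' ∧ Monotone m1' ∧
          (∀ i, m2' i ≤ (r1 : ℤ) - 1) ∧ (∀ i, m1' i ≤ -2) ∧
          ((∑ i, m2' i) + ∑ i, m1' i = (∑ i, m2 i) + ∑ i, m1 i) ∧
          u = monom xa2 m2' * monom xa1 m1'},
      ∃ w ∈ UNplus, ∃ z ∈ Ideal.span {XX xa1 (-1)},
        monom xa2 m2 * monom xa1 m1 = v + w + z     := by
  classical
  obtain ⟨s, rfl⟩ : ∃ s, r1 = s + 1 := ⟨r1 - 1, by omega⟩
  by_cases hlast : m1 ⟨s, by omega⟩ = -1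
  · -- the monomial ends in x_{α₁}(-1), so it lies in the ideal U·x_{α₁}(-1)
    refine ⟨0, Submodule.zero_mem _, 0, Submodule.zero_mem _,
      monom xa2 m2 * monom xa1 m1, ?_, by simp⟩
    have h1 : monom xa1 m1 =
        aprod (List.ofFn fun i : Fin s => m1 i.castSucc) * aa (-1) := by
      rw [monom_eq_aprod, List.ofFn_succ', List.concat_eq_append, aprod_append]
      congr 1
      have h2 : m1 (Fin.last s) = -1 := hlast
      rw [h2]
      rw [show aprod [(-1 : ℤ)] = aa (-1) * 1 from rfl, mul_one]
    rw [h1, ← mul_assoc]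
    exact mem_Ia_mul _
  · -- all m1-modes are ≤ -2; run the reduction machine
    have hm1le : ∀ i, m1 i ≤ -2 := by
      intro i
      have hile : i ≤ (⟨s, by omega⟩ : Fin (s + 1)) := by
        rw [Fin.le_def]
        have := i.isLt
        simp only
        omega
      have h1 : m1 i ≤ m1 ⟨s, by omega⟩ := hm1 hile
      have h2 := hm1neg ⟨s, by omega⟩
      omega
    set GoodSet : Set Uenv := {u : Uenv |
        ∃ (m2' : Fin r2 → ℤ) (m1' : Fin (s + 1) → ℤ),
          Monotone m2' ∧ Monotone m1' ∧
          (∀ i, m2' i ≤ ((s + 1 : ℕ) : ℤ) - 1) ∧ (∀ i, m1' i ≤ -2) ∧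
          ((∑ i, m2' i) + ∑ i, m1' i = (∑ i, m2 i) + ∑ i, m1 i) ∧
          u = monom xa2 m2' * monom xa1 m1'} with hGoodSet
    set SG : Submodule ℂ Uenv := Submodule.span ℂ GoodSet with hSG
    set UNr : Submodule ℂ Uenv := Submodule.restrictScalars ℂ UNplus with hUNr
    set Iar : Submodule ℂ Uenv :=
      Submodule.restrictScalars ℂ (Ideal.span {XX xa1 (-1)}) with hIar
    have hmem : monom xa2 m2 * monom xa1 m1 ∈ (SG ⊔ UNr) ⊔ Iar := by
      rw [monom_eq_bprod, monom_eq_aprod]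
      apply reduceAll s r2 ((∑ i, m2 i) + ∑ i, m1 i) ((SG ⊔ UNr) ⊔ Iar)
        ?_ ?_ ?_ r2 (List.ofFn m2) (List.ofFn m1) (by simp) (by simp) ?_ ?_
        (le_trans List.countP_le_length (by simp))
      · intro y hy
        exact Submodule.mem_sup_left (Submodule.mem_sup_right hy)
      · intro y hy
        exact Submodule.mem_sup_right hy
      · intro B A hB hA hBle hAle hsum
        apply Submodule.mem_sup_left
        apply Submodule.mem_sup_left
        apply Submodule.subset_span
        have := good_mem (s + 1) r2 ((∑ i, m2 i) + ∑ i, m1 i) B A hB hA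
          (by intro x hx; have := hBle x hx; push_cast; omega) hAle hsum
        exact this
      · intro x hx
        rcases (List.mem_ofFn).mp hx with ⟨i, hi⟩
        rw [← hi]
        exact hm1le i
      · rw [List.sum_ofFn, List.sum_ofFn]
    rcases Submodule.mem_sup.mp hmem with ⟨y, hy, z, hz, hyz⟩
    rcases Submodule.mem_sup.mp hy with ⟨v, hv, w, hw, hvw⟩
    exact ⟨v, hv, w, hw, z, hz, by rw [← hyz, ← hvw]⟩


end
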